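/- Let L be an e-cyclic residuated lattice satisfying the left prelinearity law, let a, b ∈ L with a ≤ e and b ≤ e, and set u = (b\a) ∧ e and v = (a\b) ∧ e. Then C[u] ∩ C[v] = {e} and C[C[a] ∪ C[v]] = C[C[a] ∪ C[b]] = C[C[u] ∪ C[b]]. (This verifies Monteiro's condition characterizing relative normality for the lattice of principal convex subalgebras: u, v witness C[u] ∧ C[v] = ⊥ and C[u] ∨ C[b] = C[a] ∨ C[b] = C[a] ∨ C[v].) -/
import Mathlib


universe u

/-- A residuated lattice: a lattice-ordered monoid with left and right residuals.
`ldiv x z` is `x \ z` and `rdiv z y` is `z / y`. -/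
class ResiduatedLattice (α : Type u) extends Lattice α, Monoid α where
  ldiv : α → α → α
  rdiv : α → α → α
  mul_le_iff_le_ldiv : ∀ x y z : α, x * y ≤ z ↔ y ≤ ldiv x z
  mul_le_iff_le_rdiv : ∀ x y z : α, x * y ≤ z ↔ x ≤ rdiv z y

namespace ResiduatedLattice

variable {α : Type u} [ResiduatedLattice α]

/-- `L` is e-cyclic if `x \ e = e / x` for all `x`. -/
def ECyclic (α : Type u) [ResiduatedLattice α] : Prop :=
  ∀ x : α, ldiv x 1 = rdiv 1 x

/-- Absolute value: `|x| = x ⊓ (e / x) ⊓ e`. -/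
def absv (x : α) : α := x ⊓ rdiv 1 x ⊓ 1

/-- A convex subalgebra: contains `e`, closed under all the operations, and order-convex. -/
structure IsConvexSubalgebra (H : Set α) : Prop where
  one_mem : (1 : α) ∈ H
  mul_mem : ∀ ⦃x⦄, x ∈ H → ∀ ⦃y⦄, y ∈ H → x * y ∈ H
  sup_mem : ∀ ⦃x⦄, x ∈ H → ∀ ⦃y⦄, y ∈ H → x ⊔ y ∈ H
  inf_mem : ∀ ⦃x⦄, x ∈ H → ∀ ⦃y⦄, y ∈ H → x ⊓ y ∈ H
  ldiv_mem : ∀ ⦃x⦄, x ∈ H → ∀ ⦃y⦄, y ∈ H → ldiv x y ∈ H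
  rdiv_mem : ∀ ⦃x⦄, x ∈ H → ∀ ⦃y⦄, y ∈ H → rdiv x y ∈ H
  convex : ∀ ⦃a⦄, a ∈ H → ∀ ⦃b⦄, b ∈ H → ∀ ⦃x⦄, a ≤ x → x ≤ b → x ∈ H

/-- `C[S]`: the smallest convex subalgebra containing `S`. -/
def convexClosure (S : Set α) : Set α :=
  ⋂₀ {H : Set α | IsConvexSubalgebra H ∧ S ⊆ H}

end ResiduatedLattice

open ResiduatedLattice

section Aux

variable {α : Type u} [ResiduatedLattice α]

lemma rl_mul_le_mul {x x' y y' : α} (hx : x ≤ x') (hy : y ≤ y') : x * y ≤ x' * y' := by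
  have h1 : y' ≤ ldiv x' (x' * y') := (mul_le_iff_le_ldiv x' y' (x' * y')).mp le_rfl
  have h2 : x' * y ≤ x' * y' := (mul_le_iff_le_ldiv x' y (x' * y')).mpr (hy.trans h1)
  have h3 : x' ≤ rdiv (x' * y') y := (mul_le_iff_le_rdiv x' y (x' * y')).mp h2
  exact (mul_le_iff_le_rdiv x y (x' * y')).mpr (hx.trans h3)

lemma rl_mul_le_one {x y : α} (hx : x ≤ 1) (hy : y ≤ 1) : x * y ≤ 1 := by
  have := rl_mul_le_mul hx hy; simpa using this

lemma rl_mul_le_left {x y : α} (hy : y ≤ 1) : x * y ≤ x := by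
  have := rl_mul_le_mul (le_refl x) hy; simpa using this

lemma rl_mul_le_right {x y : α} (hx : x ≤ 1) : x * y ≤ y := by
  have := rl_mul_le_mul hx (le_refl y); simpa using this

lemma rl_mul_sup (x y z : α) : x * (y ⊔ z) = x * y ⊔ x * z := by
  apply le_antisymm
  · refine (mul_le_iff_le_ldiv x _ _).mpr (sup_le ?_ ?_)
    · exact (mul_le_iff_le_ldiv x y _).mp le_sup_left
    · exact (mul_le_iff_le_ldiv x z _).mp le_sup_right
  · exact sup_le (rl_mul_le_mul le_rfl le_sup_left) (rl_mul_le_mul le_rfl le_sup_right)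

lemma rl_sup_mul (x y z : α) : (x ⊔ y) * z = x * z ⊔ y * z := by
  apply le_antisymm
  · refine (mul_le_iff_le_rdiv _ z _).mpr (sup_le ?_ ?_)
    · exact (mul_le_iff_le_rdiv x z _).mp le_sup_left
    · exact (mul_le_iff_le_rdiv y z _).mp le_sup_right
  · exact sup_le (rl_mul_le_mul le_sup_left le_rfl) (rl_mul_le_mul le_sup_right le_rfl)

lemma rl_pow_le_one {g : α} (hg : g ≤ 1) : ∀ n : ℕ, g ^ n ≤ 1
  | 0 => by simp
  | n + 1 => by rw [pow_succ]; exact rl_mul_le_one (rl_pow_le_one hg n) hg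

lemma absv_le_self (x : α) : absv x ≤ x := inf_le_left.trans inf_le_left

lemma absv_le_one (x : α) : absv x ≤ 1 := inf_le_right

lemma absv_le_rdiv (x : α) : absv x ≤ rdiv 1 x := inf_le_left.trans inf_le_right

lemma absv_mul_self_le_one (x : α) : absv x * x ≤ 1 :=
  (mul_le_iff_le_rdiv _ x 1).mpr (absv_le_rdiv x)

lemma self_mul_absv_le_one (hec : ECyclic α) (x : α) : x * absv x ≤ 1 :=
  (mul_le_iff_le_ldiv x _ 1).mpr ((absv_le_rdiv x).trans (hec x).ge)

lemma le_absv {t c : α} (h1 : t ≤ c) (h2 : t ≤ 1) (h3 : t * c ≤ 1) : t ≤ absv c :=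
  le_inf (le_inf h1 ((mul_le_iff_le_rdiv t c 1).mp h3)) h2

lemma absv_of_le_one {g : α} (hg : g ≤ 1) : absv g = g :=
  le_antisymm (absv_le_self g) (le_absv le_rfl hg (rl_mul_le_one hg hg))

lemma eq_one_of_one_le_absv {x : α} (h : 1 ≤ absv x) : x = 1 := by
  have h1 : (1 : α) ≤ x := h.trans (absv_le_self x)
  have h2 : x ≤ 1 := by
    have : (1 : α) ≤ rdiv 1 x := h.trans (absv_le_rdiv x)
    have := (mul_le_iff_le_rdiv 1 x 1).mpr this
    simpa using this
  exact le_antisymm h2 h1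

lemma rl_sup_mul_eq_one {x y z : α} (hx : x ≤ 1) (hy : y ≤ 1)
    (hxy : x ⊔ y = 1) (hxz : x ⊔ z = 1) : x ⊔ y * z = 1 := by
  have hz : z ≤ 1 := by
    have h : z ≤ x ⊔ z := le_sup_right
    rw [hxz] at h; exact h
  apply le_antisymm (sup_le hx (rl_mul_le_one hy hz))
  calc (1 : α) = (x ⊔ y) * (x ⊔ z) := by rw [hxy, hxz, one_mul]
    _ = (x * x ⊔ x * z) ⊔ (y * x ⊔ y * z) := by rw [rl_sup_mul, rl_mul_sup, rl_mul_sup]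
    _ ≤ x ⊔ y * z := by
        refine sup_le (sup_le ?_ ?_) (sup_le ?_ le_sup_right)
        · exact (rl_mul_le_left hx).trans le_sup_left
        · exact (rl_mul_le_left hz).trans le_sup_left
        · exact (rl_mul_le_right hy).trans le_sup_left

lemma rl_pow_sup_pow {u v : α} (hu : u ≤ 1) (hv : v ≤ 1) (huv : u ⊔ v = 1)
    (n m : ℕ) : u ^ n ⊔ v ^ m = 1 := by
  have step1 : ∀ k : ℕ, u ⊔ v ^ k = 1 := by
    intro k
    induction k with
    | zero => simp [hu]
    | succ k ih => rw [pow_succ]; exact rl_sup_mul_eq_one hu (rl_pow_le_one hv k) ih huv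
  have step2 : v ^ m ⊔ u ^ n = 1 := by
    induction n with
    | zero => simp [rl_pow_le_one hv m]
    | succ k ih =>
        rw [pow_succ]
        exact rl_sup_mul_eq_one (rl_pow_le_one hv m) (rl_pow_le_one hu k) ih
          (by rw [sup_comm]; exact step1 m)
  rw [sup_comm]; exact step2

end Aux

section Closure

variable {α : Type u} [ResiduatedLattice α]

lemma mem_convexClosure {S : Set α} {x : α} :
    x ∈ convexClosure S ↔ ∀ H : Set α, IsConvexSubalgebra H → S ⊆ H → x ∈ H := by
  simp [convexClosure, Set.mem_sInter, and_imp]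

lemma subset_convexClosure (S : Set α) : S ⊆ convexClosure S := fun x hx =>
  mem_convexClosure.mpr fun _ _ hS => hS hx

lemma convexClosure_subset {S H : Set α} (hH : IsConvexSubalgebra H) (hS : S ⊆ H) :
    convexClosure S ⊆ H := fun _ hx => mem_convexClosure.mp hx H hH hS

lemma isConvexSubalgebra_convexClosure (S : Set α) :
    IsConvexSubalgebra (convexClosure S) where
  one_mem := mem_convexClosure.mpr fun _ hH _ => hH.one_mem
  mul_mem := fun x hx y hy => mem_convexClosure.mpr fun H hH hS =>
    hH.mul_mem (mem_convexClosure.mp hx H hH hS) (mem_convexClosure.mp hy H hH hS)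
  sup_mem := fun x hx y hy => mem_convexClosure.mpr fun H hH hS =>
    hH.sup_mem (mem_convexClosure.mp hx H hH hS) (mem_convexClosure.mp hy H hH hS)
  inf_mem := fun x hx y hy => mem_convexClosure.mpr fun H hH hS =>
    hH.inf_mem (mem_convexClosure.mp hx H hH hS) (mem_convexClosure.mp hy H hH hS)
  ldiv_mem := fun x hx y hy => mem_convexClosure.mpr fun H hH hS =>
    hH.ldiv_mem (mem_convexClosure.mp hx H hH hS) (mem_convexClosure.mp hy H hH hS)
  rdiv_mem := fun x hx y hy => mem_convexClosure.mpr fun H hH hS =>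
    hH.rdiv_mem (mem_convexClosure.mp hx H hH hS) (mem_convexClosure.mp hy H hH hS)
  convex := fun p hp q hq x hpx hxq => mem_convexClosure.mpr fun H hH hS =>
    hH.convex (mem_convexClosure.mp hp H hH hS) (mem_convexClosure.mp hq H hH hS) hpx hxq

/-- The principal upper-bound set `{x | ∃ n, gⁿ ≤ |x|}` is a convex subalgebra
(for `g ≤ 1`, in an e-cyclic residuated lattice). -/
lemma isConvexSubalgebra_principal (hec : ECyclic α) {g : α} (hg : g ≤ 1) :
    IsConvexSubalgebra {x : α | ∃ n : ℕ, g ^ n ≤ absv x} := by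
  -- common preparation: from witnesses n, m get a single power below both absvs
  have common : ∀ {x y : α} {n m : ℕ}, g ^ n ≤ absv x → g ^ m ≤ absv y →
      ∃ h : α, h ≤ 1 ∧ h ≤ absv x ∧ h ≤ absv y ∧ ∃ N : ℕ, ∀ k : ℕ, h ^ k = g ^ (N * k) := by
    intro x y n m hx hy
    refine ⟨g ^ (n + m), rl_pow_le_one hg _, ?_, ?_, ⟨n + m, fun k => by rw [← pow_mul]⟩⟩
    · calc g ^ (n + m) = g ^ n * g ^ m := pow_add g n m
        _ ≤ g ^ n * 1 := rl_mul_le_mul le_rfl (rl_pow_le_one hg m)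
        _ = g ^ n := mul_one _
        _ ≤ absv x := hx
    · calc g ^ (n + m) = g ^ n * g ^ m := pow_add g n m
        _ ≤ 1 * g ^ m := rl_mul_le_mul (rl_pow_le_one hg n) le_rfl
        _ = g ^ m := one_mul _
        _ ≤ absv y := hy
  constructor
  · -- one_mem
    exact ⟨0, by rw [pow_zero, absv_of_le_one le_rfl]⟩
  · -- mul_mem
    rintro x ⟨n, hx⟩ y ⟨m, hy⟩
    obtain ⟨h, h1, hax, hay, N, hpow⟩ := common hx hy
    have hxs : h ≤ x := hax.trans (absv_le_self x)
    have hys : h ≤ y := hay.trans (absv_le_self y)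
    have hx1 : h * x ≤ 1 := (rl_mul_le_mul hax le_rfl).trans (absv_mul_self_le_one x)
    have hy1 : h * y ≤ 1 := (rl_mul_le_mul hay le_rfl).trans (absv_mul_self_le_one y)
    refine ⟨N * 2, ?_⟩
    rw [← hpow 2, pow_two]
    refine le_absv (rl_mul_le_mul hxs hys) (rl_mul_le_one h1 h1) ?_
    calc h * h * (x * y) = h * ((h * x) * y) := by rw [mul_assoc, mul_assoc]
      _ ≤ h * (1 * y) := rl_mul_le_mul le_rfl (rl_mul_le_mul hx1 le_rfl)
      _ = h * y := by rw [one_mul]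
      _ ≤ 1 := hy1
  · -- sup_mem
    rintro x ⟨n, hx⟩ y ⟨m, hy⟩
    obtain ⟨h, h1, hax, hay, N, hpow⟩ := common hx hy
    have hx1 : h * x ≤ 1 := (rl_mul_le_mul hax le_rfl).trans (absv_mul_self_le_one x)
    have hy1 : h * y ≤ 1 := (rl_mul_le_mul hay le_rfl).trans (absv_mul_self_le_one y)
    refine ⟨N * 1, ?_⟩
    rw [← hpow 1, pow_one]
    refine le_absv ((hax.trans (absv_le_self x)).trans le_sup_left) h1 ?_
    rw [rl_mul_sup]; exact sup_le hx1 hy1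
  · -- inf_mem
    rintro x ⟨n, hx⟩ y ⟨m, hy⟩
    obtain ⟨h, h1, hax, hay, N, hpow⟩ := common hx hy
    have hx1 : h * x ≤ 1 := (rl_mul_le_mul hax le_rfl).trans (absv_mul_self_le_one x)
    refine ⟨N * 1, ?_⟩
    rw [← hpow 1, pow_one]
    refine le_absv (le_inf (hax.trans (absv_le_self x)) (hay.trans (absv_le_self y))) h1 ?_
    exact (rl_mul_le_mul le_rfl inf_le_left).trans hx1
  · -- ldiv_mem
    rintro x ⟨n, hx⟩ y ⟨m, hy⟩
    obtain ⟨h, h1, hax, hay, N, hpow⟩ := common hx hy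
    have hxh : x * h ≤ 1 := (rl_mul_le_mul le_rfl hax).trans (self_mul_absv_le_one hec x)
    have hy1 : h * y ≤ 1 := (rl_mul_le_mul hay le_rfl).trans (absv_mul_self_le_one y)
    refine ⟨N * 2, ?_⟩
    rw [← hpow 2, pow_two]
    refine le_absv ?_ (rl_mul_le_one h1 h1) ?_
    · refine (mul_le_iff_le_ldiv x _ y).mp ?_
      calc x * (h * h) = (x * h) * h := (mul_assoc x h h).symm
        _ ≤ 1 * h := rl_mul_le_mul hxh le_rfl
        _ = h := one_mul h
        _ ≤ y := hay.trans (absv_le_self y)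
    · have hd : x * ldiv x y ≤ y := (mul_le_iff_le_ldiv x (ldiv x y) y).mpr le_rfl
      calc h * h * ldiv x y = h * (h * ldiv x y) := mul_assoc h h _
        _ ≤ h * (x * ldiv x y) := rl_mul_le_mul le_rfl
            (rl_mul_le_mul (hax.trans (absv_le_self x)) le_rfl)
        _ ≤ h * y := rl_mul_le_mul le_rfl hd
        _ ≤ 1 := hy1
  · -- rdiv_mem : rdiv x y = x / y
    rintro x ⟨n, hx⟩ y ⟨m, hy⟩
    obtain ⟨h, h1, hax, hay, N, hpow⟩ := common hx hy
    have hx1 : h * x ≤ 1 := (rl_mul_le_mul hax le_rfl).trans (absv_mul_self_le_one x)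
    have hyy : y * h ≤ 1 := (rl_mul_le_mul le_rfl hay).trans (self_mul_absv_le_one hec y)
    have hys : h ≤ y := hay.trans (absv_le_self y)
    have hy1 : h * y ≤ 1 := (rl_mul_le_mul hay le_rfl).trans (absv_mul_self_le_one y)
    have hd : rdiv x y * y ≤ x := (mul_le_iff_le_rdiv (rdiv x y) y x).mpr le_rfl
    refine ⟨N * 2, ?_⟩
    rw [← hpow 2, pow_two]
    refine le_absv ?_ (rl_mul_le_one h1 h1) ?_
    · refine (mul_le_iff_le_rdiv _ y x).mp ?_
      calc h * h * y = h * (h * y) := mul_assoc h h y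
        _ ≤ h * 1 := rl_mul_le_mul le_rfl hy1
        _ = h := mul_one h
        _ ≤ x := hax.trans (absv_le_self x)
    · -- h * rdiv x y ≤ rdiv 1 y, then h * that ≤ y * (rdiv 1 y) ≤ 1
      have step : h * rdiv x y ≤ rdiv 1 y := by
        refine (mul_le_iff_le_rdiv _ y 1).mp ?_
        calc h * rdiv x y * y = h * (rdiv x y * y) := mul_assoc _ _ _
          _ ≤ h * x := rl_mul_le_mul le_rfl hd
          _ ≤ 1 := hx1
      have ycyc : y * rdiv 1 y ≤ 1 := by
        refine (mul_le_iff_le_ldiv y _ 1).mpr ?_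
        rw [hec y]
      calc h * h * rdiv x y = h * (h * rdiv x y) := mul_assoc _ _ _
        _ ≤ y * rdiv 1 y := rl_mul_le_mul hys step
        _ ≤ 1 := ycyc
  · -- convex
    rintro p ⟨n, hp⟩ q ⟨m, hq⟩ x hpx hxq
    obtain ⟨h, h1, hap, haq, N, hpow⟩ := common hp hq
    refine ⟨N * 1, ?_⟩
    rw [← hpow 1, pow_one]
    refine le_absv ((hap.trans (absv_le_self p)).trans hpx) h1 ?_
    calc h * x ≤ h * q := rl_mul_le_mul le_rfl hxq
      _ ≤ absv q * q := rl_mul_le_mul haq le_rfl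
      _ ≤ 1 := absv_mul_self_le_one q

end Closure

/-- Monteiro's condition for the principal convex subalgebras. -/
theorem stmt10 {α : Type u} [ResiduatedLattice α] (hec : ECyclic α)
    (hpre : ∀ x y : α, (ldiv x y ⊓ 1) ⊔ (ldiv y x ⊓ 1) = 1)
    (a b : α) (ha : a ≤ 1) (hb : b ≤ 1)
    (u v : α) (hu : u = ldiv b a ⊓ 1) (hv : v = ldiv a b ⊓ 1) :
    convexClosure {u} ∩ convexClosure {v} = {1} ∧
    convexClosure (convexClosure {a} ∪ convexClosure {v}) =
      convexClosure (convexClosure {a} ∪ convexClosure {b}) ∧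
    convexClosure (convexClosure {u} ∪ convexClosure {b}) =
      convexClosure (convexClosure {a} ∪ convexClosure {b}) := by
  have hu1 : u ≤ 1 := hu ▸ inf_le_right
  have hv1 : v ≤ 1 := hv ▸ inf_le_right
  have huv : u ⊔ v = 1 := by rw [sup_comm, hu, hv]; exact hpre a b
  -- membership helpers
  have one_mem_cc : ∀ S : Set α, (1 : α) ∈ convexClosure S := fun S =>
    (isConvexSubalgebra_convexClosure S).one_mem
  refine ⟨?_, ?_, ?_⟩
  · -- C[u] ∩ C[v] = {1}
    apply Set.eq_singleton_iff_unique_mem.mpr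
    refine ⟨⟨one_mem_cc _, one_mem_cc _⟩, ?_⟩
    rintro x ⟨hxu, hxv⟩
    have hsu : convexClosure {u} ⊆ {x : α | ∃ n : ℕ, u ^ n ≤ absv x} :=
      convexClosure_subset (isConvexSubalgebra_principal hec hu1)
        (Set.singleton_subset_iff.mpr ⟨1, by rw [pow_one, absv_of_le_one hu1]⟩)
    have hsv : convexClosure {v} ⊆ {x : α | ∃ n : ℕ, v ^ n ≤ absv x} :=
      convexClosure_subset (isConvexSubalgebra_principal hec hv1)
        (Set.singleton_subset_iff.mpr ⟨1, by rw [pow_one, absv_of_le_one hv1]⟩)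
    obtain ⟨n, hn⟩ := hsu hxu
    obtain ⟨m, hm⟩ := hsv hxv
    have h1 : (1 : α) ≤ absv x := by
      rw [← rl_pow_sup_pow hu1 hv1 huv n m]; exact sup_le hn hm
    exact eq_one_of_one_le_absv h1
  · -- C[C[a] ∪ C[v]] = C[C[a] ∪ C[b]]
    have Hab := isConvexSubalgebra_convexClosure (convexClosure {a} ∪ convexClosure {b})
    have Hav := isConvexSubalgebra_convexClosure (convexClosure {a} ∪ convexClosure {v})
    have ha_ab : a ∈ convexClosure (convexClosure {a} ∪ convexClosure {b}) :=
      subset_convexClosure _ (Set.mem_union_left _ (subset_convexClosure _ rfl))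
    have hb_ab : b ∈ convexClosure (convexClosure {a} ∪ convexClosure {b}) :=
      subset_convexClosure _ (Set.mem_union_right _ (subset_convexClosure _ rfl))
    have ha_av : a ∈ convexClosure (convexClosure {a} ∪ convexClosure {v}) :=
      subset_convexClosure _ (Set.mem_union_left _ (subset_convexClosure _ rfl))
    have hv_av : v ∈ convexClosure (convexClosure {a} ∪ convexClosure {v}) :=
      subset_convexClosure _ (Set.mem_union_right _ (subset_convexClosure _ rfl))
    apply le_antisymm
    · -- v ∈ C[C[a] ∪ C[b]]
      have hvmem : v ∈ convexClosure (convexClosure {a} ∪ convexClosure {b}) := by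
        rw [hv]; exact Hab.inf_mem (Hab.ldiv_mem ha_ab hb_ab) Hab.one_mem
      refine convexClosure_subset Hab (Set.union_subset ?_ ?_)
      · exact convexClosure_subset Hab (Set.singleton_subset_iff.mpr ha_ab)
      · exact convexClosure_subset Hab (Set.singleton_subset_iff.mpr hvmem)
    · -- b ∈ C[C[a] ∪ C[v]]
      have havb : a * v ≤ b := by
        refine (mul_le_iff_le_ldiv a v b).mpr ?_
        rw [hv]; exact inf_le_left
      have hbmem : b ∈ convexClosure (convexClosure {a} ∪ convexClosure {v}) :=
        Hav.convex (Hav.mul_mem ha_av hv_av) Hav.one_mem havb hb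
      refine convexClosure_subset Hav (Set.union_subset ?_ ?_)
      · exact convexClosure_subset Hav (Set.singleton_subset_iff.mpr ha_av)
      · exact convexClosure_subset Hav (Set.singleton_subset_iff.mpr hbmem)
  · -- C[C[u] ∪ C[b]] = C[C[a] ∪ C[b]]
    have Hab := isConvexSubalgebra_convexClosure (convexClosure {a} ∪ convexClosure {b})
    have Hub := isConvexSubalgebra_convexClosure (convexClosure {u} ∪ convexClosure {b})
    have ha_ab : a ∈ convexClosure (convexClosure {a} ∪ convexClosure {b}) :=
      subset_convexClosure _ (Set.mem_union_left _ (subset_convexClosure _ rfl))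
    have hb_ab : b ∈ convexClosure (convexClosure {a} ∪ convexClosure {b}) :=
      subset_convexClosure _ (Set.mem_union_right _ (subset_convexClosure _ rfl))
    have hu_ub : u ∈ convexClosure (convexClosure {u} ∪ convexClosure {b}) :=
      subset_convexClosure _ (Set.mem_union_left _ (subset_convexClosure _ rfl))
    have hb_ub : b ∈ convexClosure (convexClosure {u} ∪ convexClosure {b}) :=
      subset_convexClosure _ (Set.mem_union_right _ (subset_convexClosure _ rfl))
    apply le_antisymm
    · -- u ∈ C[C[a] ∪ C[b]]
      have humem : u ∈ convexClosure (convexClosure {a} ∪ convexClosure {b}) := by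
        rw [hu]; exact Hab.inf_mem (Hab.ldiv_mem hb_ab ha_ab) Hab.one_mem
      refine convexClosure_subset Hab (Set.union_subset ?_ ?_)
      · exact convexClosure_subset Hab (Set.singleton_subset_iff.mpr humem)
      · exact convexClosure_subset Hab (Set.singleton_subset_iff.mpr hb_ab)
    · -- a ∈ C[C[u] ∪ C[b]]
      have hbua : b * u ≤ a := by
        refine (mul_le_iff_le_ldiv b u a).mpr ?_
        rw [hu]; exact inf_le_left
      have hamem : a ∈ convexClosure (convexClosure {u} ∪ convexClosure {b}) :=
        Hub.convex (Hub.mul_mem hb_ub hu_ub) Hub.one_mem hbua ha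
      refine convexClosure_subset Hub (Set.union_subset ?_ ?_)
      · exact convexClosure_subset Hub (Set.singleton_subset_iff.mpr hamem)
      · exact convexClosure_subset Hub (Set.singleton_subset_iff.mpr hb_ub)
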